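/- Let (e,f) be a local BMW pair in A. Then κ_e·κ_f = κ_e·f·e, κ_f·κ_e = κ_f·e·f, and κ_f·κ_e = κ_f·e⁻¹·f⁻¹. -/
import Mathlib

namespace BMWPaper

noncomputable section

/-- `κ_u := λ⁻¹ ν⁻¹ (q - u)(q⁻¹ + u)` for an invertible element `u` of a ℂ-algebra,
where `λ := q - q⁻¹`. -/
def kap (q ν : ℂ) {A : Type*} [Ring A] [Algebra ℂ A] (u : Aˣ) : A :=
  ((q - q⁻¹)⁻¹ * ν⁻¹) • ((q • (1 : A) - (u : A)) * (q⁻¹ • (1 : A) + (u : A)))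

/-- `μ := λ⁻¹ ν⁻¹ (q - ν)(q⁻¹ + ν)`. -/
def muBMW (q ν : ℂ) : ℂ := ((q - q⁻¹)⁻¹ * ν⁻¹) * ((q - ν) * (q⁻¹ + ν))

/-- A local BMW pair `(e, f)` of invertible elements of a ℂ-algebra `A`:
`efe = fef`, `e κ_e = κ_e e = ν κ_e`, `f κ_f = κ_f f = ν κ_f`,
`κ_f e κ_f = ν⁻¹ κ_f` and `κ_f e⁻¹ κ_f = ν κ_f`. -/
def LocalBMWPair (q ν : ℂ) {A : Type*} [Ring A] [Algebra ℂ A] (e f : Aˣ) : Prop :=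
  (e : A) * f * e = (f : A) * e * f ∧
  (e : A) * kap q ν e = ν • kap q ν e ∧
  kap q ν e * e = ν • kap q ν e ∧
  (f : A) * kap q ν f = ν • kap q ν f ∧
  kap q ν f * f = ν • kap q ν f ∧
  kap q ν f * e * kap q ν f = ν⁻¹ • kap q ν f ∧
  kap q ν f * (↑e⁻¹ : A) * kap q ν f = ν • kap q ν f

lemma kap_expand {q ν : ℂ} (hq0 : q ≠ 0) (hl : q - q⁻¹ ≠ 0) (hν : ν ≠ 0)
    {A : Type*} [Ring A] [Algebra ℂ A] (e : Aˣ)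
    (hee : kap q ν e * e = ν • kap q ν e) :
    kap q ν e = (1 : A) - (q - q⁻¹)⁻¹ • ((e : A) - (↑e⁻¹ : A)) := by
  have hkey : q - q⁻¹ = q⁻¹ * (q^2 - 1) := by
    rw [mul_sub, mul_one, pow_two, ← mul_assoc, inv_mul_cancel₀ hq0, one_mul]
  have hq2 : q^2 - 1 ≠ 0 := by
    intro h
    exact hl (by rw [hkey, h, mul_zero])
  set E : A := (1 : A) - (q - q⁻¹)⁻¹ • ((e : A) - (↑e⁻¹ : A)) with hE
  have h1 : kap q ν e = ν⁻¹ • (E * e) := by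
    rw [hE, kap]
    simp only [sub_mul, mul_add, mul_sub, add_mul, smul_mul_assoc, mul_smul_comm,
      one_mul, mul_one, smul_smul, smul_sub, smul_add, Units.inv_mul]
    match_scalars
    all_goals rw [hkey]
    all_goals (field_simp; try ring)
    all_goals tauto
  have h3 : ν⁻¹ • (E * (↑e * ↑e)) = E * ↑e := by
    have h := hee
    rw [h1] at h
    simpa [mul_assoc, smul_mul_assoc, smul_smul, mul_inv_cancel₀ hν] using h
  have h4 := congrArg (fun z => z * (↑e⁻¹ : A)) h3
  simp only [smul_mul_assoc, mul_assoc, Units.mul_inv_cancel_left, Units.mul_inv,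
    mul_one] at h4
  rw [h1]; exact h4

lemma eigen_inv {ν : ℂ} (hν : ν ≠ 0) {A : Type*} [Ring A] [Algebra ℂ A] (k : A) (u : Aˣ)
    (h : k * u = ν • k) : k * (↑u⁻¹ : A) = ν⁻¹ • k := by
  have h1 : k = ν • (k * ↑u⁻¹) := by
    have h2 := congrArg (fun z => z * (↑u⁻¹ : A)) h
    simpa [mul_assoc, smul_mul_assoc] using h2
  calc k * ↑u⁻¹ = ν⁻¹ • (ν • (k * ↑u⁻¹)) := by
        rw [smul_smul, inv_mul_cancel₀ hν, one_smul]
    _ = ν⁻¹ • k := by rw [← h1]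

/-- Core computation: from the sandwich relations `κ_f e^{±1} κ_f` we get
`κ_f κ_e = κ_f e f = κ_f e⁻¹ f⁻¹`. -/
lemma half {q ν : ℂ} (hq0 : q ≠ 0) (hl : q - q⁻¹ ≠ 0) (hν : ν ≠ 0)
    {A : Type*} [Ring A] [Algebra ℂ A] (e f : Aˣ)
    (hb : (e : A) * f * e = (f : A) * e * f)
    (hee : kap q ν e * e = ν • kap q ν e)
    (hff : kap q ν f * f = ν • kap q ν f)
    (hs1 : kap q ν f * e * kap q ν f = ν⁻¹ • kap q ν f)
    (hs2 : kap q ν f * (↑e⁻¹ : A) * kap q ν f = ν • kap q ν f) :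
    kap q ν f * kap q ν e = kap q ν f * e * f ∧
    kap q ν f * kap q ν e = kap q ν f * (↑e⁻¹ : A) * (↑f⁻¹ : A) := by
  have hKe := kap_expand hq0 hl hν e hee
  have hKf := kap_expand hq0 hl hν f hff
  have hE : (↑e : A) = ↑e⁻¹ + (q - q⁻¹) • (1 : A) - (q - q⁻¹) • kap q ν e := by
    rw [hKe, smul_sub, smul_smul, mul_inv_cancel₀ hl, one_smul]
    abel
  have hF : (↑f : A) = ↑f⁻¹ + (q - q⁻¹) • (1 : A) - (q - q⁻¹) • kap q ν f := by
    rw [hKf, smul_sub, smul_smul, mul_inv_cancel₀ hl, one_smul]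
    abel
  have hFi : (↑f⁻¹ : A) = ↑f - (q - q⁻¹) • (1 : A) + (q - q⁻¹) • kap q ν f := by
    rw [hF]; abel
  have hffi : kap q ν f * (↑f⁻¹ : A) = ν⁻¹ • kap q ν f := eigen_inv hν _ f hff
  have heei : kap q ν e * (↑e⁻¹ : A) = ν⁻¹ • kap q ν e := eigen_inv hν _ e hee
  have hs1' : kap q ν f * ((↑e : A) * kap q ν f) = ν⁻¹ • kap q ν f := by
    rw [← mul_assoc]; exact hs1
  have hs2' : kap q ν f * ((↑e⁻¹ : A) * kap q ν f) = ν • kap q ν f := by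
    rw [← mul_assoc]; exact hs2
  have hffL : ∀ x : A, kap q ν f * ((↑f : A) * x) = ν • (kap q ν f * x) := fun x => by
    rw [← mul_assoc, hff, smul_mul_assoc]
  have hffiL : ∀ x : A, kap q ν f * ((↑f⁻¹ : A) * x) = ν⁻¹ • (kap q ν f * x) := fun x => by
    rw [← mul_assoc, hffi, smul_mul_assoc]
  have hs2L : ∀ x : A, kap q ν f * ((↑e⁻¹ : A) * (kap q ν f * x)) = ν • (kap q ν f * x) :=
    fun x => by rw [← mul_assoc, ← mul_assoc, hs2, smul_mul_assoc]
  -- braid variants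
  have hbU : e * f * e = f * e * f := Units.ext (by simpa using hb)
  have b1U : e * f⁻¹ = f⁻¹ * (e⁻¹ * (f * e)) := by
    have h := congrArg (fun x => f⁻¹ * e⁻¹ * x * f⁻¹) hbU
    simpa [mul_assoc] using h
  have b2U : e⁻¹ * (f⁻¹ * e) = f * (e⁻¹ * f⁻¹) := by
    have hbiU := congrArg (fun x => x⁻¹) hbU
    simp only [mul_inv_rev] at hbiU
    have h := congrArg (fun x => f * x * e) hbiU
    simpa [mul_assoc] using h.symm
  have b1 : (↑e : A) * ↑f⁻¹ = ↑f⁻¹ * ((↑e⁻¹ : A) * (↑f * ↑e)) := by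
    simpa using congrArg Units.val b1U
  have b2 : (↑e⁻¹ : A) * ((↑f⁻¹ : A) * ↑e) = (↑f : A) * ((↑e⁻¹ : A) * ↑f⁻¹) := by
    simpa using congrArg Units.val b2U
  -- step a1
  have a1 : kap q ν f * ((↑e : A) * ↑f)
      = kap q ν f * ((↑e : A) * ↑f⁻¹) + (q - q⁻¹) • (kap q ν f * ↑e)
        - ((q - q⁻¹) * ν⁻¹) • kap q ν f := by
    conv_lhs => rw [hF]
    simp only [mul_add, mul_sub, mul_smul_comm, mul_one, smul_smul, hs1']
  have a2 : kap q ν f * ((↑e : A) * ↑f⁻¹)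
      = ν⁻¹ • (kap q ν f * ((↑e⁻¹ : A) * (↑f * ↑e))) := by
    conv_lhs => rw [b1]
    rw [hffiL]
  have a3 : kap q ν f * ((↑e⁻¹ : A) * (↑f * ↑e))
      = ν • (kap q ν f * ((↑e⁻¹ : A) * ↑f⁻¹)) + (q - q⁻¹) • kap q ν f
        - ((q - q⁻¹) * ν) • (kap q ν f * ↑e) := by
    conv_lhs => rw [hF]
    simp only [add_mul, sub_mul, smul_mul_assoc, one_mul, mul_add, mul_sub,
      mul_smul_comm, mul_one, smul_smul, Units.inv_mul, b2, hffL, hs2L]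
  have hq2 : q^2 - 1 ≠ 0 := by
    intro hcon
    apply hl
    have : q * (q - q⁻¹) = q^2 - 1 := by
      rw [mul_sub, mul_inv_cancel₀ hq0]; ring
    have h0 : q * (q - q⁻¹) = 0 := by rw [this, hcon]
    rcases mul_eq_zero.mp h0 with h5 | h5
    · exact absurd h5 hq0
    · exact h5
  have h6 : q^2 * ν - ν ≠ 0 := by
    have hfac : q^2 * ν - ν = ν * (q^2 - 1) := by ring
    rw [hfac]; exact mul_ne_zero hν hq2
  have hA : kap q ν f * ((↑e : A) * ↑f) = kap q ν f * ((↑e⁻¹ : A) * ↑f⁻¹) := by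
    rw [a1, a2, a3]
    generalize (q - q⁻¹) = L
    match_scalars
    all_goals (field_simp; try ring)
  have hB : kap q ν f * ((↑e⁻¹ : A) * ↑f⁻¹)
      = kap q ν f * ((↑e⁻¹ : A) * ↑f) - (q - q⁻¹) • (kap q ν f * ↑e⁻¹)
        + ((q - q⁻¹) * ν) • kap q ν f := by
    conv_lhs => rw [hFi]
    simp only [mul_add, mul_sub, mul_smul_comm, mul_one, smul_smul, hs2']
  have hC : kap q ν f * ((↑e : A) * ↑f)
      = kap q ν f * ((↑e⁻¹ : A) * ↑f) + ((q - q⁻¹) * ν) • kap q ν f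
        - (q - q⁻¹) • (kap q ν f * (kap q ν e * ↑f)) := by
    conv_lhs => rw [hE]
    simp only [add_mul, sub_mul, smul_mul_assoc, one_mul, mul_add, mul_sub,
      mul_smul_comm, smul_smul, hff]
  have key : kap q ν f * (kap q ν e * ↑f) = kap q ν f * ↑e⁻¹ := by
    have e1 : (q - q⁻¹) • (kap q ν f * (kap q ν e * ↑f))
        = kap q ν f * ((↑e⁻¹ : A) * ↑f) + ((q - q⁻¹) * ν) • kap q ν f
          - kap q ν f * ((↑e : A) * ↑f) := by
      rw [hC]; module
    rw [hA, hB] at e1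
    have e2 : (q - q⁻¹) • (kap q ν f * (kap q ν e * ↑f))
        = (q - q⁻¹) • (kap q ν f * ↑e⁻¹) := by
      rw [e1]; module
    have e3 := congrArg (fun z => (q - q⁻¹)⁻¹ • z) e2
    simpa [smul_smul, inv_mul_cancel₀ hl] using e3
  have goal3 : kap q ν f * kap q ν e = kap q ν f * ((↑e⁻¹ : A) * ↑f⁻¹) := by
    have h := congrArg (fun z => z * (↑f⁻¹ : A)) key
    simpa [mul_assoc] using h
  refine ⟨?_, ?_⟩
  · rw [mul_assoc]; rw [goal3, ← hA]
  · rw [mul_assoc]; exact goal3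

theorem stmt2 (q ν : ℂ) (hq0 : q ≠ 0) (hq1 : q ≠ 1) (hqm1 : q ≠ -1)
    (hν0 : ν ≠ 0) (hνq : ν ≠ q) (hνq' : ν ≠ -q⁻¹)
    (A : Type*) [Ring A] [Algebra ℂ A]
    (e f : Aˣ) (h : LocalBMWPair q ν e f) :
    kap q ν e * kap q ν f = kap q ν e * f * e ∧
    kap q ν f * kap q ν e = kap q ν f * e * f ∧
    kap q ν f * kap q ν e = kap q ν f * (↑e⁻¹ : A) * (↑f⁻¹ : A) := by
  obtain ⟨hb, _, hee, _, hff, hs1, hs2⟩ := h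
  have hl : q - q⁻¹ ≠ 0 := by
    intro hcon
    have h2 : q * (q - q⁻¹) = q^2 - 1 := by
      rw [mul_sub, mul_inv_cancel₀ hq0]; ring
    have h3 : q^2 - 1 = 0 := by rw [← h2, hcon, mul_zero]
    have h4 : (q - 1) * (q + 1) = 0 := by linear_combination h3
    rcases mul_eq_zero.mp h4 with h5 | h5
    · exact hq1 (by linear_combination h5)
    · exact hqm1 (by linear_combination h5)
  -- μ' := 1 - λ⁻¹ (ν - ν⁻¹) ≠ 0
  have hμ : (1 : ℂ) - (q - q⁻¹)⁻¹ * (ν - ν⁻¹) ≠ 0 := by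
    have h1 : ((1 : ℂ) - (q - q⁻¹)⁻¹ * (ν - ν⁻¹)) * ((q - q⁻¹) * ν)
        = (q - ν) * (q⁻¹ + ν) := by
      have H1 : (q - q⁻¹)⁻¹ * (q - q⁻¹) = 1 := inv_mul_cancel₀ hl
      have H2 : ν⁻¹ * ν = 1 := inv_mul_cancel₀ hν0
      have H3 : q⁻¹ * q = 1 := inv_mul_cancel₀ hq0
      linear_combination (ν⁻¹ * ν - ν^2) * H1 + H2 - H3
    intro hcon
    rw [hcon, zero_mul] at h1
    have h2 : (q - ν) ≠ 0 := sub_ne_zero.mpr (fun hh => hνq hh.symm)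
    have h3 : (q⁻¹ + ν) ≠ 0 := by
      intro hh
      exact hνq' (by linear_combination hh)
    exact (mul_ne_zero h2 h3) h1.symm
  obtain ⟨G2, G3⟩ := half hq0 hl hν0 e f hb hee hff hs1 hs2
  refine ⟨?_, G2, G3⟩
  -- now derive the mirrored sandwich relations and apply `half` with e,f swapped
  have hKe := kap_expand hq0 hl hν0 e hee
  have hKf := kap_expand hq0 hl hν0 f hff
  have heei : kap q ν e * (↑e⁻¹ : A) = ν⁻¹ • kap q ν e := eigen_inv hν0 _ e hee
  have hbU : e * f * e = f * e * f := Units.ext (by simpa using hb)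
  have bbU : f * (e * f) = e * (f * e) := by
    rw [← mul_assoc, ← mul_assoc]; exact hbU.symm
  have b3U : f⁻¹ * (e * f) = e * (f * e⁻¹) := by
    have h := congrArg (fun x => f⁻¹ * x * e⁻¹) hbU
    simpa [mul_assoc] using h
  have b2U : e⁻¹ * (f⁻¹ * e) = f * (e⁻¹ * f⁻¹) := by
    have hbiU := congrArg (fun x => x⁻¹) hbU
    simp only [mul_inv_rev] at hbiU
    have h := congrArg (fun x => f * x * e) hbiU
    simpa [mul_assoc] using h.symm
  have bbiU : f⁻¹ * (e⁻¹ * f⁻¹) = e⁻¹ * (f⁻¹ * e⁻¹) := by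
    have hbiU := congrArg (fun x => x⁻¹) hbU
    simp only [mul_inv_rev] at hbiU
    simpa [mul_assoc] using hbiU.symm
  have bb : (↑f : A) * (↑e * ↑f) = ↑e * ((↑f : A) * ↑e) := by
    simpa using congrArg Units.val bbU
  have b3 : (↑f⁻¹ : A) * (↑e * ↑f) = ↑e * ((↑f : A) * ↑e⁻¹) := by
    simpa using congrArg Units.val b3U
  have b2 : (↑e⁻¹ : A) * ((↑f⁻¹ : A) * ↑e) = (↑f : A) * ((↑e⁻¹ : A) * ↑f⁻¹) := by
    simpa using congrArg Units.val b2U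
  have bbi : (↑f⁻¹ : A) * ((↑e⁻¹ : A) * ↑f⁻¹) = (↑e⁻¹ : A) * ((↑f⁻¹ : A) * ↑e⁻¹) := by
    simpa using congrArg Units.val bbiU
  -- move identities
  have m1 : kap q ν f * ((↑e : A) * ↑f) = (↑e : A) * ((↑f : A) * kap q ν e) := by
    rw [hKf, hKe]
    simp only [sub_mul, smul_mul_assoc, one_mul, mul_sub, mul_smul_comm, mul_one,
      smul_sub, bb, b3]
    try module
  have m2 : kap q ν f * ((↑e⁻¹ : A) * ↑f⁻¹) = (↑e⁻¹ : A) * ((↑f⁻¹ : A) * kap q ν e) := by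
    rw [hKf, hKe]
    simp only [sub_mul, smul_mul_assoc, one_mul, mul_sub, mul_smul_comm, mul_one,
      smul_sub, ← b2, bbi]
    try module
  have G2' : kap q ν f * kap q ν e = (↑e : A) * ((↑f : A) * kap q ν e) := by
    rw [G2, mul_assoc, m1]
  have G3' : kap q ν f * kap q ν e = (↑e⁻¹ : A) * ((↑f⁻¹ : A) * kap q ν e) := by
    rw [G3, mul_assoc, m2]
  have hfke : (↑f : A) * kap q ν e = (↑e⁻¹ : A) * (kap q ν f * kap q ν e) := by
    rw [G2', Units.inv_mul_cancel_left]
  have hfike : (↑f⁻¹ : A) * kap q ν e = (↑e : A) * (kap q ν f * kap q ν e) := by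
    rw [G3', Units.mul_inv_cancel_left]
  have s1 : kap q ν e * ((↑f : A) * kap q ν e)
      = ν⁻¹ • (kap q ν e * (kap q ν f * kap q ν e)) := by
    rw [hfke, ← mul_assoc, heei, smul_mul_assoc]
  have s2 : kap q ν e * ((↑f⁻¹ : A) * kap q ν e)
      = ν • (kap q ν e * (kap q ν f * kap q ν e)) := by
    rw [hfike, ← mul_assoc, hee, smul_mul_assoc]
  have kee : kap q ν e * kap q ν e = ((1 : ℂ) - (q - q⁻¹)⁻¹ * (ν - ν⁻¹)) • kap q ν e := by
    have h : kap q ν e * kap q ν e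
        = kap q ν e * ((1 : A) - (q - q⁻¹)⁻¹ • ((↑e : A) - ↑e⁻¹)) :=
      congrArg (fun z => kap q ν e * z) hKe
    rw [h]
    simp only [mul_sub, mul_one, mul_smul_comm, smul_sub, hee, heei, smul_smul]
    generalize (q - q⁻¹)⁻¹ = w
    match_scalars
    all_goals (try ring)
    all_goals (field_simp; try ring)
  have hK : kap q ν e * (kap q ν f * kap q ν e) = kap q ν e := by
    have h : kap q ν e * (kap q ν f * kap q ν e)
        = kap q ν e * (((1 : A) - (q - q⁻¹)⁻¹ • ((↑f : A) - ↑f⁻¹)) * kap q ν e) :=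
      congrArg (fun z => kap q ν e * (z * kap q ν e)) hKf
    have h2 : kap q ν e * (kap q ν f * kap q ν e)
        = ((1 : ℂ) - (q - q⁻¹)⁻¹ * (ν - ν⁻¹)) • kap q ν e
          + ((q - q⁻¹)⁻¹ * (ν - ν⁻¹)) • (kap q ν e * (kap q ν f * kap q ν e)) := by
      conv_lhs => rw [h]
      simp only [sub_mul, smul_mul_assoc, one_mul, mul_sub, mul_smul_comm, smul_sub,
        s1, s2, kee, smul_smul]
      generalize (q - q⁻¹)⁻¹ = w
      match_scalars
      all_goals ring
    have h3 : ((1 : ℂ) - (q - q⁻¹)⁻¹ * (ν - ν⁻¹)) • (kap q ν e * (kap q ν f * kap q ν e))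
        = ((1 : ℂ) - (q - q⁻¹)⁻¹ * (ν - ν⁻¹)) • kap q ν e := by
      conv_lhs => rw [sub_smul, one_smul]
      nth_rewrite 1 [h2]
      module
    have h4 := congrArg (fun z => ((1 : ℂ) - (q - q⁻¹)⁻¹ * (ν - ν⁻¹))⁻¹ • z) h3
    simpa [smul_smul, inv_mul_cancel₀ hμ] using h4
  have sand1e : kap q ν e * (↑f : A) * kap q ν e = ν⁻¹ • kap q ν e := by
    rw [mul_assoc, s1, hK]
  have sand2e : kap q ν e * (↑f⁻¹ : A) * kap q ν e = ν • kap q ν e := by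
    rw [mul_assoc, s2, hK]
  obtain ⟨G1, _⟩ := half hq0 hl hν0 f e hb.symm hff hee sand1e sand2e
  exact G1

end

end BMWPaper
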